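/- Let f ∈ C_B[0,∞), and let a_0(n), a_1(n) be convergent real sequences satisfying 2a_0(n) − a_1(n) = 1 for all n (no positivity of the operators is assumed). Then for every x ≥ 0, lim_{n→∞} V_{n,1}(f; x) = f(x). -/

import Mathlib

open MeasureTheory Filter Topology

/-- Baskakov basis function `p_{n,k}(x) = C(n+k-1, k) x^k / (1+x)^{n+k}`. -/
noncomputable def bask (n k : ℕ) (x : ℝ) : ℝ :=
  (Nat.choose (n + k - 1) k : ℝ) * x ^ k / (1 + x) ^ (n + k)

/-- Modified basis `p^1_{n,k}(x) = a(x,n) p_{n+1,k}(x) + b(x,n) p_{n+1,k-1}(x)`,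
with `p_{n+1,-1} = 0`. -/
noncomputable def p1 (a0 a1 : ℕ → ℝ) (n k : ℕ) (x : ℝ) : ℝ :=
  (a0 n + a1 n * x) * bask (n + 1) k x
    + (a0 n - a1 n * (1 + x)) * (if k = 0 then 0 else bask (n + 1) (k - 1) x)

/-- First-order modified Baskakov–Durrmeyer operator. -/
noncomputable def V1 (a0 a1 : ℕ → ℝ) (n : ℕ) (f : ℝ → ℝ) (x : ℝ) : ℝ :=
  ((n : ℝ) - 1) * ∑' k : ℕ, p1 a0 a1 n k x * ∫ t in Set.Ioi (0 : ℝ), bask n k t * f t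

section BaskakovAux

open Set

noncomputable def gq (n k : ℕ) (x : ℝ) : ℝ :=
  ((k:ℝ)+1)*((k:ℝ)+2) / (((n:ℝ)-2)*((n:ℝ)-3)) - 2*x*((k:ℝ)+1) / ((n:ℝ)-2) + x^2

noncomputable def Aq (n : ℕ) : ℝ := (((n:ℝ)-2) * ((n:ℝ)-3))⁻¹
noncomputable def Bq (n : ℕ) : ℝ := ((n:ℝ)-2)⁻¹

noncomputable def St (K ε x : ℝ) (n : ℕ) : ℝ :=
  (K * Aq n) * (((n:ℝ)+1) * ((n:ℝ)+2) * x^2)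
    + (K * (4*Aq n - 2*x*Bq n)) * (((n:ℝ)+1) * x) + (K * (2*Aq n - 2*x*Bq n + x^2) + ε)

noncomputable def St' (K ε x : ℝ) (n : ℕ) : ℝ :=
  (K * Aq n) * (((n:ℝ)+1) * ((n:ℝ)+2) * x^2)
    + (K * (6*Aq n - 2*x*Bq n)) * (((n:ℝ)+1) * x) + (K * (6*Aq n - 4*x*Bq n + x^2) + ε)

lemma hasDeriv_inv_pow (b : ℕ) {t : ℝ} (ht : (0:ℝ) ≤ t) :
    HasDerivAt (fun t : ℝ => -(((b:ℝ)+1)⁻¹) * ((1+t)^(b+1))⁻¹) (((1+t)^(b+2))⁻¹) t := by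
  have h0 : (0:ℝ) < 1 + t := by linarith
  have h1 : HasDerivAt (fun t : ℝ => 1 + t) 1 t := (hasDerivAt_id t).const_add 1
  have h2 : HasDerivAt (fun t : ℝ => (1+t)^(b+1)) (((b:ℝ)+1) * (1+t)^b * 1) t := by
    simpa using h1.fun_pow (b+1)
  have h3 := (h2.inv (by positivity)).const_mul (-(((b:ℝ)+1)⁻¹))
  refine h3.congr_deriv ?_
  have hb : ((b:ℝ)+1) ≠ 0 := by positivity
  field_simp
  ring

lemma tendsto_inv_pow_atTop (b : ℕ) :
    Tendsto (fun t : ℝ => ((1+t)^(b+1))⁻¹) atTop (𝓝 0) := by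
  apply Tendsto.inv_tendsto_atTop
  exact (tendsto_pow_atTop (Nat.succ_ne_zero b)).comp (tendsto_atTop_add_const_left _ 1 tendsto_id)

lemma contWithin (b : ℕ) : ContinuousWithinAt
    (fun t : ℝ => -(((b:ℝ)+1)⁻¹) * ((1+t)^(b+1))⁻¹) (Ici (0:ℝ)) 0 := by
  apply ContinuousAt.continuousWithinAt
  have : ContinuousAt (fun t : ℝ => ((1+t)^(b+1))) 0 := by fun_prop
  exact (this.inv₀ (by norm_num)).const_mul _

lemma tendsto_g_aux (b : ℕ) :
    Tendsto (fun t : ℝ => -(((b:ℝ)+1)⁻¹) * ((1+t)^(b+1))⁻¹) atTop (𝓝 0) := by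
  simpa using (tendsto_inv_pow_atTop b).const_mul (-(((b:ℝ)+1)⁻¹))

lemma integrableOn_one_add_inv (b : ℕ) :
    IntegrableOn (fun t : ℝ => ((1+t)^(b+2))⁻¹) (Ioi (0:ℝ)) := by
  apply integrableOn_Ioi_deriv_of_nonneg (contWithin b)
    (fun t ht => hasDeriv_inv_pow b (le_of_lt ht)) (fun t ht => inv_nonneg.2 (pow_nonneg (by linarith [ht.out]) _)) (tendsto_g_aux b)

lemma integral_one_add_inv (b : ℕ) :
    ∫ t in Ioi (0:ℝ), ((1+t)^(b+2))⁻¹ = ((b:ℝ)+1)⁻¹ := by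
  rw [integral_Ioi_of_hasDerivAt_of_nonneg (contWithin b)
    (fun t ht => hasDeriv_inv_pow b (le_of_lt ht)) (fun t ht => inv_nonneg.2 (pow_nonneg (by linarith [ht.out]) _)) (tendsto_g_aux b)]
  norm_num

lemma pointwise_bd {a m : ℕ} (ham : a + 1 ≤ m) {t : ℝ} (ht : 0 ≤ t) :
    t^a * ((1+t)^m)⁻¹ ≤ ((1+t)^(m-a))⁻¹ := by
  have h1 : (0:ℝ) < 1 + t := by linarith
  have h2 : t^a ≤ (1+t)^a := pow_le_pow_left₀ ht (by linarith) a
  have h3 : (1+t)^m = (1+t)^a * (1+t)^(m-a) := by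
    rw [← pow_add]; congr 1; omega
  rw [h3, mul_inv, ← mul_assoc]
  calc t^a * ((1+t)^a)⁻¹ * ((1+t)^(m-a))⁻¹ ≤ (1+t)^a * ((1+t)^a)⁻¹ * ((1+t)^(m-a))⁻¹ := by
        apply mul_le_mul_of_nonneg_right (mul_le_mul_of_nonneg_right h2 (by positivity)) (by positivity)
    _ = ((1+t)^(m-a))⁻¹ := by field_simp

lemma integrableOn_pow_div (a c : ℕ) :
    IntegrableOn (fun t : ℝ => t^a * ((1+t)^(a+2+c))⁻¹) (Ioi (0:ℝ)) := by
  apply Integrable.mono (integrableOn_one_add_inv 0)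
  · apply ContinuousOn.aestronglyMeasurable _ measurableSet_Ioi
    apply (continuousOn_pow a).mul
    apply ContinuousOn.inv₀ (by fun_prop)
    intro t ht
    have : (0:ℝ) < 1 + t := by have := ht.out; linarith
    positivity
  · rw [ae_restrict_iff' measurableSet_Ioi]
    filter_upwards with t ht
    have ht' : (0:ℝ) ≤ t := le_of_lt ht.out
    have h1 : (0:ℝ) < 1 + t := by linarith
    rw [Real.norm_eq_abs, Real.norm_eq_abs, abs_of_nonneg (by positivity),
      abs_of_nonneg (by positivity)]
    calc t^a * ((1+t)^(a+2+c))⁻¹ ≤ ((1+t)^(a+2+c-a))⁻¹ := pointwise_bd (by omega) ht'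
      _ ≤ ((1+t)^(0+2))⁻¹ := by
          apply inv_anti₀ (by positivity)
          apply pow_le_pow_right₀ (by linarith)
          omega

lemma integral_pow_div (a : ℕ) : ∀ c : ℕ,
    ∫ t in Ioi (0:ℝ), t^a * ((1+t)^(a+2+c))⁻¹
      = (a.factorial * c.factorial : ℝ) / (a+1+c).factorial := by
  induction a with
  | zero =>
    intro c
    have h := integral_one_add_inv c
    have e : ∀ t : ℝ, t^0 * ((1+t)^(0+2+c))⁻¹ = ((1+t)^(c+2))⁻¹ := by
      intro t; rw [pow_zero, one_mul]; congr 2; omega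
    rw [show (fun t : ℝ => t^0 * ((1+t)^(0+2+c))⁻¹) = (fun t : ℝ => ((1+t)^(c+2))⁻¹) by
      funext t; exact e t] at *
    rw [h]
    rw [show 0+1+c = c+1 by omega, Nat.factorial_succ]
    push_cast [Nat.factorial]
    rw [eq_div_iff (by positivity)]
    field_simp
  | succ a ih =>
    intro c
    set m : ℕ := a + 2 + c with hm
    have hd : ∀ t ∈ Ioi (0:ℝ), HasDerivAt (fun t : ℝ => t^(a+1) * ((1+t)^m)⁻¹)
        (((a:ℝ)+1) * t^a * ((1+t)^m)⁻¹ - (m:ℝ) * (t^(a+1) * ((1+t)^(m+1))⁻¹)) t := by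
      intro t ht
      have h1 : (0:ℝ) < 1 + t := by have := ht.out; linarith
      have hp : HasDerivAt (fun t : ℝ => t^(a+1)) (((a:ℝ)+1) * t^a) t := by
        simpa using hasDerivAt_pow (a+1) t
      have h2 : HasDerivAt (fun t : ℝ => (1+t)^m) ((m:ℝ) * (1+t)^(m-1) * 1) t :=
        HasDerivAt.fun_pow ((hasDerivAt_id t).const_add 1) m
      have h3 := h2.inv (by positivity)
      have h4 := hp.mul h3
      refine h4.congr_deriv ?_
      simp only [Pi.inv_apply]
      have hm1 : (1+t)^(m-1) = (1+t)^(a+1+c) := by congr 1; omega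
      have hm2 : (m:ℝ) ≠ 0 := by positivity
      rw [hm1]
      field_simp
      ring
    have int1 : IntegrableOn (fun t:ℝ => t^a * ((1+t)^m)⁻¹) (Ioi 0) := integrableOn_pow_div a c
    have int2 : IntegrableOn (fun t:ℝ => t^(a+1) * ((1+t)^(m+1))⁻¹) (Ioi 0) := by
      have := integrableOn_pow_div (a+1) c
      rwa [show a+1+2+c = m+1 by omega] at this
    have hint : IntegrableOn (fun t:ℝ =>
        ((a:ℝ)+1) * t^a * ((1+t)^m)⁻¹ - (m:ℝ) * (t^(a+1)*((1+t)^(m+1))⁻¹)) (Ioi 0) := by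
      apply Integrable.sub
      · simpa [mul_assoc] using int1.const_mul ((a:ℝ)+1)
      · exact int2.const_mul _
    have hcont : ContinuousWithinAt (fun t:ℝ => t^(a+1) * ((1+t)^m)⁻¹) (Ici (0:ℝ)) 0 := by
      apply ContinuousAt.continuousWithinAt
      exact (continuousAt_pow _ _).mul (ContinuousAt.inv₀ (by fun_prop) (by norm_num))
    have htd : Tendsto (fun t:ℝ => t^(a+1) * ((1+t)^m)⁻¹) atTop (𝓝 0) := by
      apply squeeze_zero' (g := fun t:ℝ => ((1+t))⁻¹)
      · filter_upwards [eventually_ge_atTop (0:ℝ)] with t ht; positivity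
      · filter_upwards [eventually_ge_atTop (0:ℝ)] with t ht
        calc t^(a+1) * ((1+t)^m)⁻¹ ≤ ((1+t)^(m-(a+1)))⁻¹ := pointwise_bd (by omega) ht
          _ ≤ ((1+t)^1)⁻¹ := by
              apply inv_anti₀ (by positivity)
              apply pow_le_pow_right₀ (by linarith) (by omega)
          _ = (1+t)⁻¹ := by rw [pow_one]
      · exact Tendsto.inv_tendsto_atTop (tendsto_atTop_add_const_left _ 1 tendsto_id)
    have key := integral_Ioi_of_hasDerivAt_of_tendsto hcont hd hint htd
    simp only [ne_eq, zero_pow, Nat.succ_ne_zero, zero_mul, sub_zero, zero_sub,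
      not_false_eq_true, zero_mul, neg_zero] at key
    simp_rw [mul_assoc] at key
    rw [integral_sub (by simpa [mul_assoc] using int1.const_mul ((a:ℝ)+1))
        (int2.const_mul _), integral_const_mul, integral_const_mul, ih c, sub_eq_zero] at key
    rw [show a+1+2+c = m+1 by omega]
    have hm0 : (0:ℝ) < (m:ℝ) := by positivity
    have key2 : ∫ t in Ioi (0:ℝ), t^(a+1) * ((1+t)^(m+1))⁻¹
        = ((a:ℝ)+1) * (↑a.factorial * ↑c.factorial / ↑(a+1+c).factorial) / (m:ℝ) := by
      field_simp at key ⊢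
      linarith [key]
    rw [key2, show (a+1).factorial = (a+1) * a.factorial from Nat.factorial_succ a,
      show m.factorial = m * (a+1+c).factorial by rw [show m = (a+1+c)+1 by omega, Nat.factorial_succ]]
    have h1 : ((a+1+c).factorial : ℝ) ≠ 0 := by positivity
    push_cast
    field_simp

lemma bask_eq (n k j : ℕ) (h : j + 2 ≤ n) (t : ℝ) :
    t^j * bask n k t = ((n+k-1).choose k : ℝ) * (t^(k+j) * ((1+t)^((k+j)+2+(n-j-2)))⁻¹) := by
  unfold bask
  rw [show (k+j)+2+(n-j-2) = n + k by omega, div_eq_mul_inv, pow_add]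
  ring

lemma integrableOn_pow_bask {n : ℕ} (j k : ℕ) (h : j + 2 ≤ n) :
    IntegrableOn (fun t : ℝ => t^j * bask n k t) (Ioi (0:ℝ)) := by
  rw [show (fun t : ℝ => t^j * bask n k t)
      = (fun t : ℝ => ((n+k-1).choose k : ℝ) * (t^(k+j) * ((1+t)^((k+j)+2+(n-j-2)))⁻¹))
      from funext (bask_eq n k j h)]
  exact (integrableOn_pow_div (k+j) (n-j-2)).const_mul _

lemma integral_pow_bask {n : ℕ} (j k : ℕ) (h : j + 2 ≤ n) :
    ∫ t in Ioi (0:ℝ), t^j * bask n k t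
      = ((n+k-1).choose k : ℝ) * ((k+j).factorial * (n-j-2).factorial) / (n+k-1).factorial := by
  rw [show (fun t : ℝ => t^j * bask n k t)
      = (fun t : ℝ => ((n+k-1).choose k : ℝ) * (t^(k+j) * ((1+t)^((k+j)+2+(n-j-2)))⁻¹))
      from funext (bask_eq n k j h)]
  rw [integral_const_mul, integral_pow_div (k+j) (n-j-2),
    show (k+j)+1+(n-j-2) = n+k-1 by omega]
  ring

lemma cast_choose_key (n k : ℕ) (h : 1 ≤ n) :
    ((n+k-1).choose k : ℝ) * (k.factorial : ℝ) * ((n-1).factorial : ℝ) = ((n+k-1).factorial : ℝ) := by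
  have := Nat.choose_mul_factorial_mul_factorial (show k ≤ n+k-1 by omega)
  rw [show n+k-1-k = n-1 by omega] at this
  exact_mod_cast congrArg (Nat.cast : ℕ → ℝ) this

lemma integral_bask {n : ℕ} (k : ℕ) (h : 2 ≤ n) :
    ∫ t in Ioi (0:ℝ), bask n k t = ((n:ℝ)-1)⁻¹ := by
  have h0 := integral_pow_bask 0 k h
  simp only [pow_zero, one_mul] at h0
  rw [h0, Nat.add_zero, Nat.sub_zero]
  have key := cast_choose_key n k (by omega)
  have e1 : ((n-1).factorial : ℝ) = ((n:ℝ)-1) * ((n-2).factorial : ℝ) := by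
    rw [show n-1 = (n-2)+1 by omega, Nat.factorial_succ]
    push_cast [show ((n-2:ℕ):ℝ) = (n:ℝ)-2 from by push_cast [Nat.cast_sub (by omega : 2 ≤ n)]; ring]
    ring
  have hne : ((n+k-1).factorial : ℝ) ≠ 0 := by positivity
  have hn1 : ((n:ℝ)-1) ≠ 0 := by
    have : (2:ℝ) ≤ (n:ℝ) := by exact_mod_cast h
    linarith
  have hkf : (k.factorial : ℝ) ≠ 0 := by positivity
  have hn2 : ((n-2).factorial : ℝ) ≠ 0 := by positivity
  rw [e1] at key
  field_simp
  linarith [key]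

lemma integral_t_bask {n : ℕ} (k : ℕ) (h : 3 ≤ n) :
    ∫ t in Ioi (0:ℝ), t * bask n k t = ((k:ℝ)+1) / (((n:ℝ)-1) * ((n:ℝ)-2)) := by
  have h0 := integral_pow_bask (n := n) 1 k (by omega)
  simp only [pow_one] at h0
  rw [h0]
  have key := cast_choose_key n k (by omega)
  have e0 : ((k+1).factorial : ℝ) = ((k:ℝ)+1) * (k.factorial : ℝ) := by
    rw [Nat.factorial_succ]; push_cast; ring
  have e1 : ((n-1).factorial : ℝ) = ((n:ℝ)-1) * ((n:ℝ)-2) * ((n-3).factorial : ℝ) := by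
    rw [show n-1 = (n-3)+1+1 by omega, Nat.factorial_succ, Nat.factorial_succ]
    push_cast [show ((n-3:ℕ):ℝ) = (n:ℝ)-3 from by push_cast [Nat.cast_sub (by omega : 3 ≤ n)]; ring]
    ring
  have hne : ((n+k-1).factorial : ℝ) ≠ 0 := by positivity
  have hn1 : ((n:ℝ)-1) ≠ 0 := by
    have : (3:ℝ) ≤ (n:ℝ) := by exact_mod_cast h
    linarith
  have hn2 : ((n:ℝ)-2) ≠ 0 := by
    have : (3:ℝ) ≤ (n:ℝ) := by exact_mod_cast h
    linarith
  have hkf : (k.factorial : ℝ) ≠ 0 := by positivity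
  have hn3 : ((n-3).factorial : ℝ) ≠ 0 := by positivity
  rw [show n-1-2 = n-3 by omega, e0]
  rw [e1] at key
  field_simp
  nlinarith [key]

lemma integral_t2_bask {n : ℕ} (k : ℕ) (h : 4 ≤ n) :
    ∫ t in Ioi (0:ℝ), t^2 * bask n k t
      = ((k:ℝ)+1) * ((k:ℝ)+2) / (((n:ℝ)-1) * ((n:ℝ)-2) * ((n:ℝ)-3)) := by
  have h0 := integral_pow_bask (n := n) 2 k (by omega)
  rw [h0]
  have key := cast_choose_key n k (by omega)
  have e0 : ((k+2).factorial : ℝ) = ((k:ℝ)+1) * ((k:ℝ)+2) * (k.factorial : ℝ) := by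
    rw [show k+2 = (k+1)+1 by omega, Nat.factorial_succ, Nat.factorial_succ]; push_cast; ring
  have e1 : ((n-1).factorial : ℝ) = ((n:ℝ)-1) * ((n:ℝ)-2) * ((n:ℝ)-3) * ((n-4).factorial : ℝ) := by
    rw [show n-1 = (n-4)+1+1+1 by omega, Nat.factorial_succ, Nat.factorial_succ, Nat.factorial_succ]
    push_cast [show ((n-4:ℕ):ℝ) = (n:ℝ)-4 from by push_cast [Nat.cast_sub (by omega : 4 ≤ n)]; ring]
    ring
  have hne : ((n+k-1).factorial : ℝ) ≠ 0 := by positivity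
  have hnn : (4:ℝ) ≤ (n:ℝ) := by exact_mod_cast h
  have hn1 : ((n:ℝ)-1) ≠ 0 := by linarith
  have hn2 : ((n:ℝ)-2) ≠ 0 := by linarith
  have hn3 : ((n:ℝ)-3) ≠ 0 := by linarith
  have hkf : (k.factorial : ℝ) ≠ 0 := by positivity
  have hn4 : ((n-4).factorial : ℝ) ≠ 0 := by positivity
  rw [show n-2-2 = n-4 by omega, e0]
  rw [e1] at key
  field_simp
  linear_combination key

lemma bask_nonneg {n k : ℕ} {x : ℝ} (hx : 0 ≤ x) : 0 ≤ bask n k x := by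
  unfold bask
  have : (0:ℝ) < 1 + x := by linarith
  positivity

lemma bask_hasSum {x : ℝ} (hx : 0 ≤ x) (j : ℕ) :
    HasSum (fun k => bask (j+1) k x) 1 := by
  have h1 : (0:ℝ) < 1 + x := by linarith
  have hr : ‖x / (1+x)‖ < 1 := by
    rw [Real.norm_eq_abs, abs_of_nonneg (by positivity), div_lt_one h1]
    linarith
  have H := hasSum_choose_mul_geometric_of_norm_lt_one (𝕜 := ℝ) j hr
  have H2 := H.div_const ((1+x)^(j+1))
  have e : (fun k => (((k+j).choose j : ℝ) * (x/(1+x))^k) / (1+x)^(j+1))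
      = (fun k => bask (j+1) k x) := by
    funext k
    unfold bask
    rw [show (j+1)+k-1 = k+j by omega, show (k+j).choose k = (k+j).choose j by
      rw [← Nat.choose_symm (Nat.le_add_right k j), Nat.add_sub_cancel_left]]
    rw [div_pow, ← mul_div_assoc, div_div, ← pow_add, show k+(j+1) = (j+1)+k by omega]
  rw [e] at H2
  convert H2 using 1
  · rfl
  rw [show (1:ℝ) - x/(1+x) = (1+x)⁻¹ by field_simp; ring]
  rw [inv_pow]
  field_simp
lemma bask_shift {x : ℝ} (j k : ℕ) :
    ((k:ℝ)+1) * bask (j+1) (k+1) x = ((j:ℝ)+1) * x * bask (j+2) k x := by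
  have hc : ((j+k+1).choose (k+1) : ℝ) * ((k:ℝ)+1) = ((j+k+1).choose k : ℝ) * ((j:ℝ)+1) := by
    have := Nat.choose_succ_right_eq (j+k+1) k
    rw [show j+k+1-k = j+1 by omega] at this
    exact_mod_cast congrArg (Nat.cast : ℕ → ℝ) this
  unfold bask
  rw [show (j+1)+(k+1)-1 = j+k+1 by omega, show (j+2)+k-1 = j+k+1 by omega,
    show (j+1)+(k+1) = (j+2)+k by omega]
  rw [div_eq_mul_inv, div_eq_mul_inv, pow_succ]
  linear_combination (x^k * ((1+x)^((j+2)+k))⁻¹ * x) * hc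

lemma bask_hasSum_k {x : ℝ} (hx : 0 ≤ x) (j : ℕ) :
    HasSum (fun k : ℕ => (k:ℝ) * bask (j+1) k x) (((j:ℝ)+1) * x) := by
  have H := (bask_hasSum hx (j+1)).mul_left (((j:ℝ)+1) * x)
  have e : (fun k => ((j:ℝ)+1) * x * bask (j+1+1) k x)
      = (fun k : ℕ => (((k+1 : ℕ)):ℝ) * bask (j+1) (k+1) x) := by
    funext k; push_cast; rw [bask_shift j k]
  rw [e] at H
  have := (hasSum_nat_add_iff (f := fun k : ℕ => (k:ℝ) * bask (j+1) k x) 1).mp H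
  simpa using this

lemma bask_hasSum_kk {x : ℝ} (hx : 0 ≤ x) (j : ℕ) :
    HasSum (fun k : ℕ => (k:ℝ) * ((k:ℝ)-1) * bask (j+1) k x)
      (((j:ℝ)+1) * ((j:ℝ)+2) * x^2) := by
  have H := (bask_hasSum hx (j+2)).mul_left (((j:ℝ)+1) * ((j:ℝ)+2) * x^2)
  have e : (fun k => ((j:ℝ)+1) * ((j:ℝ)+2) * x^2 * bask (j+2+1) k x)
      = (fun k : ℕ => (((k+2:ℕ)):ℝ) * (((k+2:ℕ):ℝ)-1) * bask (j+1) (k+2) x) := by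
    funext k
    push_cast
    have h1 : ((k:ℝ)+2) * bask (j+1) (k+2) x = ((j:ℝ)+1) * x * bask (j+2) (k+1) x := by
      have := bask_shift (x := x) j (k+1); push_cast at this; linarith [this]
    have h2 : ((k:ℝ)+1) * bask (j+2) (k+1) x = ((j:ℝ)+2) * x * bask (j+3) k x := by
      have := bask_shift (x := x) (j+1) k; push_cast at this
      convert this using 2 <;> push_cast <;> ring
    have : ((k:ℝ)+2) * ((k:ℝ)+2-1) * bask (j+1) (k+2) x
        = ((j:ℝ)+1) * x * (((k:ℝ)+1) * bask (j+2) (k+1) x) := by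
      rw [show ((k:ℝ)+2-1) = (k:ℝ)+1 by ring]
      linear_combination ((k:ℝ)+1) * h1
    rw [this, h2, show j+2+1 = j+3 by omega]
    ring
  rw [e] at H
  have := (hasSum_nat_add_iff (f := fun k : ℕ => (k:ℝ) * ((k:ℝ)-1) * bask (j+1) k x) 2).mp H
  simpa [Finset.sum_range_succ] using this

lemma hasSum_weight_quad {x : ℝ} (hx : 0 ≤ x) (n : ℕ) (c2 c1 c0 : ℝ) :
    HasSum (fun k : ℕ => bask (n+1) k x * (c2 * ((k:ℝ) * ((k:ℝ)-1)) + c1 * (k:ℝ) + c0))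
      (c2 * (((n:ℝ)+1) * ((n:ℝ)+2) * x^2) + c1 * (((n:ℝ)+1) * x) + c0) := by
  have H := (((bask_hasSum_kk hx n).mul_left c2).add ((bask_hasSum_k hx n).mul_left c1)).add
    ((bask_hasSum hx n).mul_left c0)
  rw [mul_one] at H
  rw [show (fun k : ℕ => bask (n+1) k x * (c2 * ((k:ℝ) * ((k:ℝ)-1)) + c1 * (k:ℝ) + c0))
    = (fun k : ℕ => c2 * ((k:ℝ) * ((k:ℝ)-1) * bask (n+1) k x) + c1 * ((k:ℝ) * bask (n+1) k x)
        + c0 * bask (n+1) k x) from funext fun k => by ring]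
  exact H

lemma key_est (f : ℝ → ℝ) (hf_cont : ContinuousOn f (Set.Ici 0)) {M : ℝ} (hM0 : 0 ≤ M)
    (hM : ∀ t ∈ Set.Ici (0:ℝ), |f t| ≤ M)
    {x ε K : ℝ} (hx : 0 ≤ x) (hK : 0 ≤ K)
    (hpt : ∀ t ∈ Set.Ici (0:ℝ), |f t - f x| ≤ ε + K * (t - x)^2)
    {n : ℕ} (hn : 4 ≤ n) (k : ℕ) :
    |((n:ℝ)-1) * (∫ t in Ioi (0:ℝ), bask n k t * f t) - f x| ≤ ε + K * gq n k x := by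
  have hnc : (4:ℝ) ≤ (n:ℝ) := by exact_mod_cast hn
  have hn1 : (0:ℝ) < (n:ℝ)-1 := by linarith
  have hn2 : ((n:ℝ)-2) ≠ 0 := by linarith
  have hn3 : ((n:ℝ)-3) ≠ 0 := by linarith
  have hb0 : IntegrableOn (fun t : ℝ => bask n k t) (Ioi (0:ℝ)) := by
    have := integrableOn_pow_bask (n := n) 0 k (by omega)
    simpa using this
  have hb1 : IntegrableOn (fun t : ℝ => t * bask n k t) (Ioi (0:ℝ)) := by
    have := integrableOn_pow_bask (n := n) 1 k (by omega)
    simpa using this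
  have hb2 : IntegrableOn (fun t : ℝ => t^2 * bask n k t) (Ioi (0:ℝ)) :=
    integrableOn_pow_bask (n := n) 2 k (by omega)
  have hmf : AEStronglyMeasurable f (volume.restrict (Ioi (0:ℝ))) :=
    (hf_cont.mono (Ioi_subset_Ici le_rfl)).aestronglyMeasurable measurableSet_Ioi
  have hmb : AEStronglyMeasurable (fun t : ℝ => bask n k t) (volume.restrict (Ioi (0:ℝ))) :=
    hb0.aestronglyMeasurable
  have hmbf : AEStronglyMeasurable (fun t : ℝ => bask n k t * f t)
      (volume.restrict (Ioi (0:ℝ))) := hmb.mul hmf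
  have hbf : IntegrableOn (fun t : ℝ => bask n k t * f t) (Ioi (0:ℝ)) := by
    apply Integrable.mono (hb0.const_mul M) hmbf
    rw [ae_restrict_iff' measurableSet_Ioi]
    filter_upwards with t ht
    have ht' : (0:ℝ) ≤ t := le_of_lt ht.out
    rw [Real.norm_eq_abs, Real.norm_eq_abs, abs_mul, abs_mul,
      abs_of_nonneg (bask_nonneg ht'), abs_of_nonneg hM0]
    calc bask n k t * |f t| ≤ bask n k t * M :=
          mul_le_mul_of_nonneg_left (hM t ht') (bask_nonneg ht')
      _ = M * bask n k t := by ring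
  have e1 : ((n:ℝ)-1) * (∫ t in Ioi (0:ℝ), bask n k t * f t) - f x
      = ((n:ℝ)-1) * ∫ t in Ioi (0:ℝ), bask n k t * (f t - f x) := by
    rw [show (fun t : ℝ => bask n k t * (f t - f x))
        = fun t : ℝ => bask n k t * f t - bask n k t * f x from funext fun t => by ring]
    rw [integral_sub hbf (hb0.mul_const (f x)), integral_mul_const,
      integral_bask k (by omega)]
    field_simp
  rw [e1]
  have hInt2 : IntegrableOn (fun t : ℝ => bask n k t * (ε + K*(t-x)^2)) (Ioi (0:ℝ)) := by
    rw [show (fun t : ℝ => bask n k t * (ε + K*(t-x)^2))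
        = fun t : ℝ => (ε + K*x^2) * bask n k t + (-(2*K*x)) * (t * bask n k t)
            + K * (t^2 * bask n k t) from funext fun t => by ring]
    exact ((hb0.const_mul _).add (hb1.const_mul _)).add (hb2.const_mul _)

  have hgI : IntegrableOn (fun t : ℝ => bask n k t * (f t - f x)) (Ioi (0:ℝ)) := by
    rw [show (fun t : ℝ => bask n k t * (f t - f x))
        = fun t : ℝ => bask n k t * f t - bask n k t * f x from funext fun t => by ring]
    exact hbf.sub (hb0.mul_const (f x))
  have hbound : |∫ t in Ioi (0:ℝ), bask n k t * (f t - f x)|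
      ≤ ∫ t in Ioi (0:ℝ), bask n k t * (ε + K*(t-x)^2) := by
    calc |∫ t in Ioi (0:ℝ), bask n k t * (f t - f x)|
        ≤ ∫ t in Ioi (0:ℝ), |bask n k t * (f t - f x)| := by
          simpa [Real.norm_eq_abs, abs_mul] using
            norm_integral_le_integral_norm (μ := volume.restrict (Ioi (0:ℝ)))
              (fun t : ℝ => bask n k t * (f t - f x))
      _ ≤ ∫ t in Ioi (0:ℝ), bask n k t * (ε + K*(t-x)^2) := by
          apply setIntegral_mono_on hgI.abs hInt2 measurableSet_Ioi
          intro t ht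
          have ht' : (0:ℝ) ≤ t := le_of_lt ht.out
          rw [abs_mul, abs_of_nonneg (bask_nonneg ht')]
          exact mul_le_mul_of_nonneg_left (hpt t ht') (bask_nonneg ht')
  have i12 : IntegrableOn (fun t : ℝ => (ε + K*x^2) * bask n k t
      + (-(2*K*x)) * (t * bask n k t)) (Ioi (0:ℝ)) :=
    (hb0.const_mul _).add (hb1.const_mul _)
  have i3 : IntegrableOn (fun t : ℝ => K * (t^2 * bask n k t)) (Ioi (0:ℝ)) := hb2.const_mul _
  have hval : ∫ t in Ioi (0:ℝ), bask n k t * (ε + K*(t-x)^2)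
      = (ε + K * gq n k x) / ((n:ℝ)-1) := by
    rw [show (fun t : ℝ => bask n k t * (ε + K*(t-x)^2))
        = fun t : ℝ => (ε + K*x^2) * bask n k t + (-(2*K*x)) * (t * bask n k t)
            + K * (t^2 * bask n k t) from funext fun t => by ring]
    rw [integral_add i12 i3,
      integral_add (hb0.const_mul _) (hb1.const_mul _),
      integral_const_mul, integral_const_mul, integral_const_mul,
      integral_bask k (by omega), integral_t_bask k (by omega), integral_t2_bask k (by omega)]
    unfold gq
    field_simp
    ring
  calc |((n:ℝ)-1) * ∫ t in Ioi (0:ℝ), bask n k t * (f t - f x)|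
      = ((n:ℝ)-1) * |∫ t in Ioi (0:ℝ), bask n k t * (f t - f x)| := by
        rw [abs_mul, abs_of_nonneg (le_of_lt hn1)]
    _ ≤ ((n:ℝ)-1) * ((ε + K * gq n k x) / ((n:ℝ)-1)) := by
        rw [← hval]; exact mul_le_mul_of_nonneg_left hbound (le_of_lt hn1)
    _ = ε + K * gq n k x := by field_simp

lemma hquad (K ε x : ℝ) (n k : ℕ) :
    ε + K * gq n k x = (K * Aq n) * ((k:ℝ)*((k:ℝ)-1))
      + (K * (4*Aq n - 2*x*Bq n)) * (k:ℝ) + (K * (2*Aq n - 2*x*Bq n + x^2) + ε) := by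
  unfold gq Aq Bq
  ring

lemma hquad' (K ε x : ℝ) (n k : ℕ) :
    ε + K * gq n (k+1) x = (K * Aq n) * ((k:ℝ)*((k:ℝ)-1))
      + (K * (6*Aq n - 2*x*Bq n)) * (k:ℝ) + (K * (6*Aq n - 4*x*Bq n + x^2) + ε) := by
  unfold gq Aq Bq
  push_cast
  ring

lemma H1 {x : ℝ} (hx : 0 ≤ x) (K ε : ℝ) (n : ℕ) :
    HasSum (fun k : ℕ => bask (n+1) k x * (ε + K * gq n k x)) (St K ε x n) := by
  have H := hasSum_weight_quad hx n (K * Aq n) (K * (4*Aq n - 2*x*Bq n))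
    (K * (2*Aq n - 2*x*Bq n + x^2) + ε)
  rw [show (fun k : ℕ => bask (n+1) k x * ((K * Aq n) * ((k:ℝ)*((k:ℝ)-1))
      + (K * (4*Aq n - 2*x*Bq n)) * (k:ℝ) + (K * (2*Aq n - 2*x*Bq n + x^2) + ε)))
      = fun k : ℕ => bask (n+1) k x * (ε + K * gq n k x) from
    funext fun k => by rw [← hquad K ε x n k]] at H
  exact H

lemma H2 {x : ℝ} (hx : 0 ≤ x) (K ε : ℝ) (n : ℕ) :
    HasSum (fun k : ℕ => (if k = 0 then 0 else bask (n+1) (k-1) x) * (ε + K * gq n k x))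
      (St' K ε x n) := by
  have H := hasSum_weight_quad hx n (K * Aq n) (K * (6*Aq n - 2*x*Bq n))
    (K * (6*Aq n - 4*x*Bq n + x^2) + ε)
  rw [show (fun k : ℕ => bask (n+1) k x * ((K * Aq n) * ((k:ℝ)*((k:ℝ)-1))
      + (K * (6*Aq n - 2*x*Bq n)) * (k:ℝ) + (K * (6*Aq n - 4*x*Bq n + x^2) + ε)))
      = fun k : ℕ => (if (k+1) = 0 then 0 else bask (n+1) ((k+1)-1) x) * (ε + K * gq n (k+1) x)
      from funext fun k => by
        rw [← hquad' K ε x n k]; simp] at H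
  have := (hasSum_nat_add_iff
    (f := fun k : ℕ => (if k = 0 then 0 else bask (n+1) (k-1) x) * (ε + K * gq n k x)) 1).mp H
  simpa [St'] using this

lemma Hw2 {x : ℝ} (hx : 0 ≤ x) (n : ℕ) :
    HasSum (fun k : ℕ => (if k = 0 then 0 else bask (n+1) (k-1) x)) 1 := by
  have H := bask_hasSum hx n
  rw [show (fun k : ℕ => bask (n+1) k x)
      = fun k : ℕ => (if (k+1) = 0 then 0 else bask (n+1) ((k+1)-1) x) from
    funext fun k => by simp] at H
  have := (hasSum_nat_add_iff
    (f := fun k : ℕ => (if k = 0 then 0 else bask (n+1) (k-1) x)) 1).mp H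
  simpa using this

lemma tendsto_Bq : Tendsto Bq atTop (𝓝 0) := by
  apply Tendsto.inv_tendsto_atTop
  have : Tendsto (fun n : ℕ => (n:ℝ) + (-2)) atTop atTop :=
    tendsto_atTop_add_const_right atTop (-2) tendsto_natCast_atTop_atTop
  simpa [sub_eq_add_neg] using this

lemma tendsto_Cq : Tendsto (fun n : ℕ => ((n:ℝ)-3)⁻¹) atTop (𝓝 0) := by
  apply Tendsto.inv_tendsto_atTop
  have : Tendsto (fun n : ℕ => (n:ℝ) + (-3)) atTop atTop :=
    tendsto_atTop_add_const_right atTop (-3) tendsto_natCast_atTop_atTop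
  simpa [sub_eq_add_neg] using this

lemma tendsto_Aq : Tendsto Aq atTop (𝓝 0) := by
  have h := tendsto_Bq.mul tendsto_Cq
  rw [show Aq = fun n : ℕ => Bq n * ((n:ℝ)-3)⁻¹ from funext fun n => by
    unfold Aq Bq; rw [mul_inv]]
  simpa using h

lemma tendsto_nBq : Tendsto (fun n : ℕ => ((n:ℝ)+1) * Bq n) atTop (𝓝 1) := by
  have h : Tendsto (fun n : ℕ => 1 + 3 * Bq n) atTop (𝓝 1) := by
    simpa using (tendsto_const_nhds (x := (1:ℝ)) (f := atTop)).add (tendsto_Bq.const_mul 3)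
  apply h.congr'
  filter_upwards [eventually_ge_atTop 3] with n hn
  have hnc : (3:ℝ) ≤ (n:ℝ) := by exact_mod_cast hn
  have hn2 : ((n:ℝ)-2) ≠ 0 := by linarith
  unfold Bq
  field_simp
  ring

lemma tendsto_nCq : Tendsto (fun n : ℕ => ((n:ℝ)+2) * ((n:ℝ)-3)⁻¹) atTop (𝓝 1) := by
  have h : Tendsto (fun n : ℕ => 1 + 5 * ((n:ℝ)-3)⁻¹) atTop (𝓝 1) := by
    simpa using (tendsto_const_nhds (x := (1:ℝ)) (f := atTop)).add (tendsto_Cq.const_mul 5)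
  apply h.congr'
  filter_upwards [eventually_ge_atTop 4] with n hn
  have hnc : (4:ℝ) ≤ (n:ℝ) := by exact_mod_cast hn
  have hn3 : ((n:ℝ)-3) ≠ 0 := by linarith
  field_simp
  ring

lemma tendsto_nnAq : Tendsto (fun n : ℕ => ((n:ℝ)+1) * ((n:ℝ)+2) * Aq n) atTop (𝓝 1) := by
  have h := tendsto_nBq.mul tendsto_nCq
  rw [show (fun n : ℕ => ((n:ℝ)+1) * ((n:ℝ)+2) * Aq n)
      = fun n : ℕ => (((n:ℝ)+1) * Bq n) * (((n:ℝ)+2) * ((n:ℝ)-3)⁻¹) from funext fun n => by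
    unfold Aq Bq; rw [mul_inv]; ring]
  simpa using h

lemma tendsto_nAq : Tendsto (fun n : ℕ => ((n:ℝ)+1) * Aq n) atTop (𝓝 0) := by
  have h := tendsto_nBq.mul tendsto_Cq
  rw [show (fun n : ℕ => ((n:ℝ)+1) * Aq n)
      = fun n : ℕ => (((n:ℝ)+1) * Bq n) * (((n:ℝ)-3)⁻¹) from funext fun n => by
    unfold Aq Bq; rw [mul_inv]; ring]
  simpa using h

lemma tendsto_St (K ε x : ℝ) : Tendsto (St K ε x) atTop (𝓝 ε) := by
  have h := (((tendsto_nnAq.const_mul (K*x^2)).add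
      ((tendsto_nAq.const_mul (4*K*x)).sub (tendsto_nBq.const_mul (2*K*x^2)))).add
    (((tendsto_Aq.const_mul (2*K)).sub (tendsto_Bq.const_mul (2*K*x))).add
      (tendsto_const_nhds (x := K*x^2 + ε) (f := atTop))))
  have e : (St K ε x) = fun n : ℕ => (K*x^2) * (((n:ℝ)+1) * ((n:ℝ)+2) * Aq n)
      + ((4*K*x) * (((n:ℝ)+1) * Aq n) - (2*K*x^2) * (((n:ℝ)+1) * Bq n))
      + ((2*K) * Aq n - (2*K*x) * Bq n + (K*x^2 + ε)) := funext fun n => by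
    unfold St; ring
  rw [e]
  convert h using 2
  ring
lemma tendsto_St' (K ε x : ℝ) : Tendsto (St' K ε x) atTop (𝓝 ε) := by
  have h := (((tendsto_nnAq.const_mul (K*x^2)).add
      ((tendsto_nAq.const_mul (6*K*x)).sub (tendsto_nBq.const_mul (2*K*x^2)))).add
    (((tendsto_Aq.const_mul (6*K)).sub (tendsto_Bq.const_mul (4*K*x))).add
      (tendsto_const_nhds (x := K*x^2 + ε) (f := atTop))))
  have e : (St' K ε x) = fun n : ℕ => (K*x^2) * (((n:ℝ)+1) * ((n:ℝ)+2) * Aq n)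
      + ((6*K*x) * (((n:ℝ)+1) * Aq n) - (2*K*x^2) * (((n:ℝ)+1) * Bq n))
      + ((6*K) * Aq n - (4*K*x) * Bq n + (K*x^2 + ε)) := funext fun n => by
    unfold St'; ring
  rw [e]
  convert h using 2
  ring

theorem V1_pointwise_convergence (f : ℝ → ℝ)
    (hf_cont : ContinuousOn f (Set.Ici 0))
    (hf_bdd : ∃ M : ℝ, ∀ t ∈ Set.Ici (0 : ℝ), |f t| ≤ M)
    (a0 a1 : ℕ → ℝ)
    (ha0 : ∃ l : ℝ, Tendsto a0 atTop (𝓝 l)) (ha1 : ∃ m : ℝ, Tendsto a1 atTop (𝓝 m))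
    (hrel : ∀ n : ℕ, 2 * a0 n - a1 n = 1)
    (x : ℝ) (hx : 0 ≤ x) :
    Tendsto (fun n : ℕ => V1 a0 a1 n f x) atTop (𝓝 (f x)) := by
  classical
  obtain ⟨M, hM⟩ := hf_bdd
  have hM0 : 0 ≤ M := le_trans (abs_nonneg _) (hM x hx)
  obtain ⟨l, hl⟩ := ha0
  obtain ⟨mlim, hmlim⟩ := ha1
  obtain ⟨B0, hB0⟩ : ∃ B0 : ℝ, ∀ n, |a0 n| ≤ B0 := by
    obtain ⟨B0, hB0⟩ := hl.abs.bddAbove_range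
    exact ⟨B0, fun n => hB0 ⟨n, rfl⟩⟩
  obtain ⟨B1, hB1⟩ : ∃ B1 : ℝ, ∀ n, |a1 n| ≤ B1 := by
    obtain ⟨B1, hB1⟩ := hmlim.abs.bddAbove_range
    exact ⟨B1, fun n => hB1 ⟨n, rfl⟩⟩
  have hB0' : 0 ≤ B0 := le_trans (abs_nonneg _) (hB0 0)
  have hB1' : 0 ≤ B1 := le_trans (abs_nonneg _) (hB1 0)
  obtain ⟨C, hCdef⟩ : ∃ C : ℝ, C = 1 + B0 + B1 * (1 + x) := ⟨_, rfl⟩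
  have hC1 : (1:ℝ) ≤ C := by rw [hCdef]; nlinarith
  have hC0 : (0:ℝ) < C := by linarith
  have hCa : ∀ n, |a0 n + a1 n * x| ≤ C := by
    intro n
    have h1 : |a0 n + a1 n * x| ≤ |a0 n| + |a1 n * x| := abs_add_le _ _
    rw [abs_mul, abs_of_nonneg hx] at h1
    rw [hCdef]
    nlinarith [hB0 n, hB1 n, abs_nonneg (a1 n)]
  have hCb : ∀ n, |a0 n - a1 n * (1 + x)| ≤ C := by
    intro n
    have h1 : |a0 n - a1 n * (1+x)| ≤ |a0 n| + |a1 n * (1+x)| := abs_sub _ _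
    rw [abs_mul, abs_of_nonneg (by linarith : (0:ℝ) ≤ 1 + x)] at h1
    rw [hCdef]
    nlinarith [hB0 n, hB1 n, abs_nonneg (a1 n)]
  rw [Metric.tendsto_atTop]
  intro ε₀ hε₀
  obtain ⟨ε, hεdef⟩ : ∃ ε : ℝ, ε = ε₀ / (4 * C) := ⟨_, rfl⟩
  have hε : 0 < ε := by rw [hεdef]; positivity
  obtain ⟨δ, hδ0, hδf⟩ := Metric.continuousWithinAt_iff.mp (hf_cont x hx) ε hε
  obtain ⟨K, hKdef⟩ : ∃ K : ℝ, K = 2 * M / δ^2 := ⟨_, rfl⟩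
  have hK0 : 0 ≤ K := by rw [hKdef]; positivity
  have hpt : ∀ t ∈ Set.Ici (0:ℝ), |f t - f x| ≤ ε + K * (t - x)^2 := by
    intro t ht
    by_cases hcase : |t - x| < δ
    · have h1 := hδf ht (by rw [Real.dist_eq]; exact hcase)
      rw [Real.dist_eq] at h1
      nlinarith [mul_nonneg hK0 (sq_nonneg (t-x))]
    · push_neg at hcase
      have h2 : δ^2 ≤ (t-x)^2 := by nlinarith [abs_nonneg (t-x), sq_abs (t-x)]
      have h3 : |f t - f x| ≤ 2*M := by
        calc |f t - f x| ≤ |f t| + |f x| := abs_sub _ _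
          _ ≤ 2*M := by linarith [hM t ht, hM x hx]
      have h4 : K * δ^2 = 2*M := by rw [hKdef]; field_simp
      nlinarith [mul_le_mul_of_nonneg_left h2 hK0]
  have main_bound : ∀ n : ℕ, 4 ≤ n →
      |V1 a0 a1 n f x - f x| ≤ C * St K ε x n + C * St' K ε x n := by
    intro n hn
    have hnc : (4:ℝ) ≤ (n:ℝ) := by exact_mod_cast hn
    have hn1 : (0:ℝ) < (n:ℝ) - 1 := by linarith
    have hn1' : ((n:ℝ) - 1) ≠ 0 := ne_of_gt hn1
    have hkey : ∀ k, |((n:ℝ)-1) * (∫ t in Ioi (0:ℝ), bask n k t * f t) - f x|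
        ≤ ε + K * gq n k x := fun k => key_est f hf_cont hM0 hM hx hK0 hpt hn k
    have hq0 : ∀ k, 0 ≤ ε + K * gq n k x := fun k => le_trans (abs_nonneg _) (hkey k)
    have hw10 : ∀ k, 0 ≤ bask (n+1) k x := fun k => bask_nonneg hx
    have hw20 : ∀ k : ℕ, 0 ≤ (if k = 0 then 0 else bask (n+1) (k-1) x) := by
      intro k
      by_cases h : k = 0 <;> simp [h, bask_nonneg hx]
    have hp1abs : ∀ k, |p1 a0 a1 n k x|
        ≤ C * bask (n+1) k x + C * (if k = 0 then 0 else bask (n+1) (k-1) x) := by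
      intro k
      unfold p1
      calc |(a0 n + a1 n * x) * bask (n+1) k x
            + (a0 n - a1 n * (1+x)) * (if k = 0 then 0 else bask (n+1) (k-1) x)|
          ≤ |(a0 n + a1 n * x) * bask (n+1) k x|
            + |(a0 n - a1 n * (1+x)) * (if k = 0 then 0 else bask (n+1) (k-1) x)| := abs_add_le _ _
        _ ≤ C * bask (n+1) k x + C * (if k = 0 then 0 else bask (n+1) (k-1) x) := by
            rw [abs_mul, abs_mul, abs_of_nonneg (hw10 k), abs_of_nonneg (hw20 k)]
            exact add_le_add (mul_le_mul_of_nonneg_right (hCa n) (hw10 k))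
              (mul_le_mul_of_nonneg_right (hCb n) (hw20 k))
    have hub : ∀ k, ‖p1 a0 a1 n k x * (((n:ℝ)-1) * (∫ t in Ioi (0:ℝ), bask n k t * f t) - f x)‖
        ≤ C * (bask (n+1) k x * (ε + K * gq n k x))
          + C * ((if k = 0 then 0 else bask (n+1) (k-1) x) * (ε + K * gq n k x)) := by
      intro k
      rw [Real.norm_eq_abs, abs_mul]
      calc |p1 a0 a1 n k x| * |((n:ℝ)-1) * (∫ t in Ioi (0:ℝ), bask n k t * f t) - f x|
          ≤ (C * bask (n+1) k x + C * (if k = 0 then 0 else bask (n+1) (k-1) x))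
            * (ε + K * gq n k x) := by
            apply mul_le_mul (hp1abs k) (hkey k) (abs_nonneg _)
            exact add_nonneg (mul_nonneg hC0.le (hw10 k)) (mul_nonneg hC0.le (hw20 k))
        _ = C * (bask (n+1) k x * (ε + K * gq n k x))
            + C * ((if k = 0 then 0 else bask (n+1) (k-1) x) * (ε + K * gq n k x)) := by ring
    have Hb : HasSum (fun k : ℕ => C * (bask (n+1) k x * (ε + K * gq n k x))
        + C * ((if k = 0 then 0 else bask (n+1) (k-1) x) * (ε + K * gq n k x)))
        (C * St K ε x n + C * St' K ε x n) :=
      ((H1 hx K ε n).mul_left C).add ((H2 hx K ε n).mul_left C)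
    have hsu : Summable (fun k : ℕ =>
        p1 a0 a1 n k x * (((n:ℝ)-1) * (∫ t in Ioi (0:ℝ), bask n k t * f t) - f x)) :=
      Summable.of_norm_bounded Hb.summable hub
    have hp1sum : HasSum (fun k : ℕ => p1 a0 a1 n k x) 1 := by
      have hh := ((bask_hasSum hx n).mul_left (a0 n + a1 n * x)).add
        ((Hw2 hx n).mul_left (a0 n - a1 n * (1+x)))
      rw [mul_one, mul_one] at hh
      have h2 : (a0 n + a1 n * x) + (a0 n - a1 n * (1+x)) = 1 := by
        have := hrel n; linarith
      rw [h2] at hh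
      exact hh
    have hsp1 : Summable (fun k : ℕ => p1 a0 a1 n k x) := hp1sum.summable
    have hsPI : Summable (fun k : ℕ =>
        p1 a0 a1 n k x * (∫ t in Ioi (0:ℝ), bask n k t * f t)) := by
      have e : (fun k : ℕ => p1 a0 a1 n k x * (∫ t in Ioi (0:ℝ), bask n k t * f t))
          = fun k : ℕ => ((n:ℝ)-1)⁻¹
            * ((p1 a0 a1 n k x * (((n:ℝ)-1) * (∫ t in Ioi (0:ℝ), bask n k t * f t) - f x))
              + f x * p1 a0 a1 n k x) := by
        funext k
        field_simp
        ring
      rw [e]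
      exact ((hsu.add (hsp1.mul_left (f x))).mul_left _)
    have hVu : V1 a0 a1 n f x - f x = ∑' k : ℕ,
        p1 a0 a1 n k x * (((n:ℝ)-1) * (∫ t in Ioi (0:ℝ), bask n k t * f t) - f x) := by
      have e : (fun k : ℕ =>
          p1 a0 a1 n k x * (((n:ℝ)-1) * (∫ t in Ioi (0:ℝ), bask n k t * f t) - f x))
          = fun k : ℕ => ((n:ℝ)-1) * (p1 a0 a1 n k x * (∫ t in Ioi (0:ℝ), bask n k t * f t))
            - f x * p1 a0 a1 n k x := funext fun k => by ring
      rw [e, Summable.tsum_sub (hsPI.mul_left ((n:ℝ)-1)) (hsp1.mul_left (f x)),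
        tsum_mul_left, tsum_mul_left, hp1sum.tsum_eq]
      unfold V1
      ring
    rw [hVu]
    have hsnorm : Summable (fun k : ℕ =>
        ‖p1 a0 a1 n k x * (((n:ℝ)-1) * (∫ t in Ioi (0:ℝ), bask n k t * f t) - f x)‖) :=
      Summable.of_nonneg_of_le (fun k => norm_nonneg _) hub Hb.summable
    calc |∑' k : ℕ, p1 a0 a1 n k x * (((n:ℝ)-1) * (∫ t in Ioi (0:ℝ), bask n k t * f t) - f x)|
        ≤ ∑' k : ℕ, ‖p1 a0 a1 n k x * (((n:ℝ)-1) * (∫ t in Ioi (0:ℝ), bask n k t * f t) - f x)‖ := by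
          rw [← Real.norm_eq_abs]
          exact norm_tsum_le_tsum_norm hsnorm
      _ ≤ ∑' k : ℕ, (C * (bask (n+1) k x * (ε + K * gq n k x))
            + C * ((if k = 0 then 0 else bask (n+1) (k-1) x) * (ε + K * gq n k x))) :=
          Summable.tsum_le_tsum hub hsnorm Hb.summable
      _ = C * St K ε x n + C * St' K ε x n := Hb.tsum_eq
  have hT : Tendsto (fun n : ℕ => C * St K ε x n + C * St' K ε x n) atTop (𝓝 (C * ε + C * ε)) :=
    ((tendsto_St K ε x).const_mul C).add ((tendsto_St' K ε x).const_mul C)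
  have hlt : C * ε + C * ε < ε₀ := by
    have h1 : C * ε = ε₀ / 4 := by
      rw [hεdef]
      field_simp
    linarith [h1, hε₀]
  have hev : ∀ᶠ n : ℕ in atTop, C * St K ε x n + C * St' K ε x n < ε₀ :=
    hT.eventually (eventually_lt_nhds hlt)
  obtain ⟨N, hN⟩ := (hev.and (eventually_ge_atTop 4)).exists_forall_of_atTop
  refine ⟨N, fun n hn => ?_⟩
  have h := hN n hn
  rw [Real.dist_eq]
  exact lt_of_le_of_lt (main_bound n h.2) h.1

end BaskakovAux
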